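/- Assume n ≥ k ≥ 1. Let (S_1, …, S_k) be a generic zero pattern for k×n matrices of order ℓ, whose distinct nonempty sets are A_1, …, A_ℓ with A_i occurring δ_i times. Then there exist subsets A'_1, …, A'_ℓ ⊆ [n] with A'_i ⊇ A_i and |A'_i| = k − δ_i for every i ∈ [ℓ], such that the zero pattern (S'_1, …, S'_k) consisting of δ_i copies of A'_i for each i ∈ [ℓ] together with k − Σ_{i=1}^ℓ δ_i copies of the empty set is a generic zero pattern of order ℓ. -/

import Mathlib

/-!
STATEMENT 6: Corollary 2.7 (cor:gzp-ell). Any generic zero pattern of order ℓ, with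
distinct nonempty sets A_1, …, A_ℓ occurring δ_1, …, δ_ℓ times, extends to a maximal
generic zero pattern of order ℓ: there are A'_i ⊇ A_i with |A'_i| = k − δ_i such that
the pattern with δ_i copies of A'_i (and the same number of copies of ∅) is a generic
zero pattern of order ℓ.
-/

open Finset

/-- `S = (S_1, …, S_k)` is a generic zero pattern: `|∩_{i ∈ I} S_i| ≤ k − |I|` for
every nonempty `I ⊆ [k]`. -/
def IsGenericZP {k n : ℕ} (S : Fin k → Finset (Fin n)) : Prop :=
  ∀ I : Finset (Fin k), I.Nonempty → (I.inf S).card ≤ k - I.card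

/-- The order of a zero pattern: the number of distinct nonempty sets among the `S_i`. -/
def patternOrder {k n : ℕ} (S : Fin k → Finset (Fin n)) : ℕ :=
  ((Finset.univ.image S).erase ∅).card

namespace GZPaux

variable {n k ℓ : ℕ}

/-- Genericity condition expressed on the distinct sets with multiplicities. -/
def P (k : ℕ) (δ : Fin ℓ → ℕ) (B : Fin ℓ → Finset (Fin n)) : Prop :=
  ∀ J : Finset (Fin ℓ), J.Nonempty → (J.inf B).card + ∑ i ∈ J, δ i ≤ k

lemma fiber_card (δ : Fin ℓ → ℕ) (B : Fin ℓ → Finset (Fin n))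
    (hinj : Function.Injective B) (hne : ∀ i, B i ≠ ∅) (S : Fin k → Finset (Fin n))
    (hS : Finset.univ.val.map S =
        (∑ i, Multiset.replicate (δ i) (B i)) + Multiset.replicate (k - ∑ i, δ i) ∅)
    (j : Fin ℓ) :
    (univ.filter (fun i => S i = B j)).card = δ j := by
  have h1 : Multiset.count (B j) (Finset.univ.val.map S) = δ j := by
    rw [hS, Multiset.count_add, Multiset.count_replicate, if_neg (fun h => hne j h.symm),
      Multiset.count_sum']
    rw [Finset.sum_eq_single j]
    · rw [Multiset.count_replicate, if_pos rfl]; omega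
    · intro i _ hij
      rw [Multiset.count_replicate, if_neg (fun h => hij (hinj h))]
    · simp
  rw [Multiset.count_map] at h1
  have h2 : (univ.filter (fun i => S i = B j)).card
      = Multiset.card (Multiset.filter (fun a => B j = S a) univ.val) := by
    rw [Finset.card, Finset.filter_val]
    congr 1
    exact Multiset.filter_congr (fun x _ => eq_comm)
  rw [h2, h1]

lemma mem_cases (δ : Fin ℓ → ℕ) (B : Fin ℓ → Finset (Fin n)) (S : Fin k → Finset (Fin n))
    (hS : Finset.univ.val.map S =
        (∑ i, Multiset.replicate (δ i) (B i)) + Multiset.replicate (k - ∑ i, δ i) ∅)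
    (i : Fin k) : S i = ∅ ∨ ∃ j, S i = B j := by
  have hmem : S i ∈ Finset.univ.val.map S :=
    Multiset.mem_map_of_mem _ (Finset.mem_univ i)
  rw [hS] at hmem
  rcases Multiset.mem_add.1 hmem with h | h
  · rw [Multiset.mem_sum] at h
    obtain ⟨j, _, hj⟩ := h
    exact Or.inr ⟨j, Multiset.eq_of_mem_replicate hj⟩
  · exact Or.inl (Multiset.eq_of_mem_replicate h)

lemma P_of_gzp (δ : Fin ℓ → ℕ) (hδpos : ∀ i, 1 ≤ δ i) (B : Fin ℓ → Finset (Fin n))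
    (hinj : Function.Injective B) (hne : ∀ i, B i ≠ ∅) (S : Fin k → Finset (Fin n))
    (hS : Finset.univ.val.map S =
        (∑ i, Multiset.replicate (δ i) (B i)) + Multiset.replicate (k - ∑ i, δ i) ∅)
    (hgen : IsGenericZP S) : P k δ B := by
  intro J hJ
  set F : Fin ℓ → Finset (Fin k) := fun j => univ.filter (fun i => S i = B j) with hF
  have hFc : ∀ j, (F j).card = δ j := fiber_card δ B hinj hne S hS
  set I : Finset (Fin k) := J.biUnion F with hI
  have hdisj : ∀ j1 ∈ J, ∀ j2 ∈ J, j1 ≠ j2 → Disjoint (F j1) (F j2) := by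
    intro j1 _ j2 _ h12
    refine Finset.disjoint_left.2 (fun i hi1 hi2 => ?_)
    simp only [hF, mem_filter] at hi1 hi2
    exact h12 (hinj (hi1.2 ▸ hi2.2))
  have hIcard : I.card = ∑ j ∈ J, δ j := by
    rw [hI, Finset.card_biUnion hdisj]
    exact Finset.sum_congr rfl (fun j _ => hFc j)
  have hFne : ∀ j, (F j).Nonempty := by
    intro j
    rw [← Finset.card_pos, hFc j]; exact hδpos j
  have hIne : I.Nonempty := by
    obtain ⟨j, hj⟩ := hJ
    obtain ⟨i, hi⟩ := hFne j
    exact ⟨i, Finset.mem_biUnion.2 ⟨j, hj, hi⟩⟩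
  have hinf : I.inf S = J.inf B := by
    apply le_antisymm
    · refine Finset.le_inf (fun j hj => ?_)
      obtain ⟨i, hi⟩ := hFne j
      have hSi : S i = B j := (Finset.mem_filter.1 hi).2
      exact hSi ▸ Finset.inf_le (Finset.mem_biUnion.2 ⟨j, hj, hi⟩)
    · refine Finset.le_inf (fun i hi => ?_)
      obtain ⟨j, hj, hij⟩ := Finset.mem_biUnion.1 hi
      have hSi : S i = B j := (Finset.mem_filter.1 hij).2
      rw [hSi]
      exact Finset.inf_le hj
  have hIk : I.card ≤ k := by
    have := Finset.card_le_univ I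
    simpa using this
  have hgI := hgen I hIne
  rw [hinf] at hgI
  omega

lemma gzp_of_P (δ : Fin ℓ → ℕ) (hδpos : ∀ i, 1 ≤ δ i) (B : Fin ℓ → Finset (Fin n))
    (hinj : Function.Injective B) (hne : ∀ i, B i ≠ ∅) (S : Fin k → Finset (Fin n))
    (hS : Finset.univ.val.map S =
        (∑ i, Multiset.replicate (δ i) (B i)) + Multiset.replicate (k - ∑ i, δ i) ∅)
    (hP : P k δ B) : IsGenericZP S := by
  intro I hI
  by_cases h0 : ∃ i ∈ I, S i = ∅
  · obtain ⟨i, hi, hSi⟩ := h0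
    have hle : I.inf S ⊆ ∅ := hSi ▸ Finset.inf_le hi
    rw [Finset.subset_empty.1 hle]
    simp
  · push_neg at h0
    have hex : ∀ i ∈ I, ∃ j, S i = B j := by
      intro i hi
      rcases mem_cases δ B S hS i with h | h
      · exact absurd h (Finset.nonempty_iff_ne_empty.1 (h0 i hi))
      · exact h
    obtain ⟨i0, hi0⟩ := hI
    obtain ⟨j0, _⟩ := hex i0 hi0
    set g : Fin k → Fin ℓ := fun i =>
      if h : ∃ j, S i = B j then h.choose else j0 with hg
    have hgS : ∀ i ∈ I, S i = B (g i) := by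
      intro i hi
      have h := hex i hi
      simp only [hg, dif_pos h]
      exact h.choose_spec
    set J : Finset (Fin ℓ) := I.image g with hJ
    have hJne : J.Nonempty := ⟨g i0, Finset.mem_image_of_mem g hi0⟩
    have hinf : I.inf S = J.inf B := by
      apply le_antisymm
      · refine Finset.le_inf (fun j hj => ?_)
        obtain ⟨i, hi, rfl⟩ := Finset.mem_image.1 hj
        exact (hgS i hi) ▸ Finset.inf_le hi
      · refine Finset.le_inf (fun i hi => ?_)
        rw [hgS i hi]
        exact Finset.inf_le (Finset.mem_image_of_mem g hi)
    have hcard : I.card ≤ ∑ j ∈ J, δ j := by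
      have hsub : I ⊆ J.biUnion (fun j => univ.filter (fun i => S i = B j)) := by
        intro i hi
        exact Finset.mem_biUnion.2 ⟨g i, Finset.mem_image_of_mem g hi,
          Finset.mem_filter.2 ⟨Finset.mem_univ i, hgS i hi⟩⟩
      calc I.card ≤ _ := Finset.card_le_card hsub
        _ ≤ ∑ j ∈ J, (univ.filter (fun i => S i = B j)).card := Finset.card_biUnion_le
        _ = ∑ j ∈ J, δ j :=
            Finset.sum_congr rfl (fun j _ => fiber_card δ B hinj hne S hS j)
    have := hP J hJne
    rw [hinf]
    omega

lemma order_eq (δ : Fin ℓ → ℕ) (hδpos : ∀ i, 1 ≤ δ i) (B : Fin ℓ → Finset (Fin n))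
    (hinj : Function.Injective B) (hne : ∀ i, B i ≠ ∅) (S : Fin k → Finset (Fin n))
    (hS : Finset.univ.val.map S =
        (∑ i, Multiset.replicate (δ i) (B i)) + Multiset.replicate (k - ∑ i, δ i) ∅) :
    patternOrder S = ℓ := by
  have himg : (univ.image S).erase ∅ = univ.image B := by
    ext x
    simp only [Finset.mem_erase, Finset.mem_image, Finset.mem_univ, true_and]
    constructor
    · rintro ⟨hx0, i, rfl⟩
      rcases mem_cases δ B S hS i with h | h
      · exact absurd h hx0
      · obtain ⟨j, hj⟩ := h
        exact ⟨j, hj.symm⟩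
    · rintro ⟨j, rfl⟩
      refine ⟨hne j, ?_⟩
      have : (univ.filter (fun i => S i = B j)).Nonempty := by
        rw [← Finset.card_pos, fiber_card δ B hinj hne S hS j]
        exact hδpos j
      obtain ⟨i, hi⟩ := this
      exact ⟨i, (Finset.mem_filter.1 hi).2⟩
  rw [patternOrder, himg, Finset.card_image_of_injective _ hinj]
  simp

/-- Submodularity: tight sets sharing a common element intersect to a tight set. -/
lemma tight_inter (δ : Fin ℓ → ℕ) (A : Fin ℓ → Finset (Fin n)) (hP : P k δ A)
    {j : Fin ℓ} {J1 J2 : Finset (Fin ℓ)} (h1 : j ∈ J1) (h2 : j ∈ J2)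
    (t1 : (J1.inf A).card + ∑ i ∈ J1, δ i = k)
    (t2 : (J2.inf A).card + ∑ i ∈ J2, δ i = k) :
    ((J1 ∩ J2).inf A).card + ∑ i ∈ J1 ∩ J2, δ i = k := by
  have hsum : (∑ i ∈ J1 ∪ J2, δ i) + ∑ i ∈ J1 ∩ J2, δ i
      = (∑ i ∈ J1, δ i) + ∑ i ∈ J2, δ i := Finset.sum_union_inter
  have hinfu : (J1 ∪ J2).inf A = J1.inf A ⊓ J2.inf A := Finset.inf_union
  have hPu := hP (J1 ∪ J2) ⟨j, Finset.mem_union_left _ h1⟩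
  have hPi := hP (J1 ∩ J2) ⟨j, Finset.mem_inter.2 ⟨h1, h2⟩⟩
  rw [hinfu] at hPu
  have hcui : (J1.inf A ∪ J2.inf A).card + (J1.inf A ∩ J2.inf A).card
      = (J1.inf A).card + (J2.inf A).card := Finset.card_union_add_card_inter _ _
  have hm1 : J1.inf A ≤ (J1 ∩ J2).inf A :=
    Finset.le_inf (fun b hb => Finset.inf_le (Finset.mem_inter.1 hb).1)
  have hm2 : J2.inf A ≤ (J1 ∩ J2).inf A :=
    Finset.le_inf (fun b hb => Finset.inf_le (Finset.mem_inter.1 hb).2)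
  have hmono : (J1.inf A ∪ J2.inf A).card ≤ ((J1 ∩ J2).inf A).card :=
    Finset.card_le_card (Finset.union_subset hm1 hm2)
  have : (J1.inf A ⊓ J2.inf A).card = (J1.inf A ∩ J2.inf A).card := rfl
  omega

/-- The key extension step by induction on the total deficiency. -/
lemma extend_aux (hkn : k ≤ n) (δ : Fin ℓ → ℕ) :
    ∀ N : ℕ, ∀ A : Fin ℓ → Finset (Fin n),
    (∑ j, (k - δ j - (A j).card)) ≤ N → P k δ A →
    ∃ A' : Fin ℓ → Finset (Fin n),
      (∀ j, A j ⊆ A' j ∧ (A' j).card = k - δ j) ∧ P k δ A' := by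
  intro N
  induction N with
  | zero =>
    intro A hm hP
    refine ⟨A, fun j => ⟨Finset.Subset.refl _, ?_⟩, hP⟩
    have h1 : (A j).card + δ j ≤ k := by
      have := hP {j} ⟨j, Finset.mem_singleton_self j⟩
      simpa using this
    have h2 : k - δ j - (A j).card = 0 := by
      have h3 : k - δ j - (A j).card ≤ ∑ i, (k - δ i - (A i).card) :=
        Finset.single_le_sum (f := fun i => k - δ i - (A i).card)
          (fun i _ => Nat.zero_le _) (Finset.mem_univ j)
      omega
    omega
  | succ N ih =>
    intro A hm hP
    by_cases hall : ∀ j, k - δ j - (A j).card = 0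
    · refine ⟨A, fun j => ⟨Finset.Subset.refl _, ?_⟩, hP⟩
      have h1 : (A j).card + δ j ≤ k := by
        have := hP {j} ⟨j, Finset.mem_singleton_self j⟩
        simpa using this
      have := hall j
      omega
    · push_neg at hall
      obtain ⟨j, hj⟩ := hall
      have hjlt : (A j).card + δ j < k := by omega
      -- find a good element x
      have key : ∃ x, x ∉ A j ∧ ∀ J : Finset (Fin ℓ), j ∈ J →
          (J.inf A).card + ∑ i ∈ J, δ i = k → x ∉ (J.erase j).inf A := by
        by_cases hT : ∃ J : Finset (Fin ℓ), j ∈ J ∧ (J.inf A).card + ∑ i ∈ J, δ i = k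
        · -- minimal tight set J0
          set T : Finset (Finset (Fin ℓ)) :=
            univ.powerset.filter
              (fun J => j ∈ J ∧ (J.inf A).card + ∑ i ∈ J, δ i = k) with hTdef
          have hTne : T.Nonempty := by
            obtain ⟨J, hjJ, htJ⟩ := hT
            exact ⟨J, Finset.mem_filter.2 ⟨Finset.mem_powerset.2 (Finset.subset_univ J),
              hjJ, htJ⟩⟩
          obtain ⟨J0, hJ0T, hmin⟩ := Finset.exists_min_image T Finset.card hTne
          obtain ⟨-, hjJ0, htJ0⟩ := Finset.mem_filter.1 hJ0T
          have hsub : ∀ J : Finset (Fin ℓ), j ∈ J →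
              (J.inf A).card + ∑ i ∈ J, δ i = k → J0 ⊆ J := by
            intro J hjJ htJ
            have hti := tight_inter δ A hP hjJ0 hjJ htJ0 htJ
            have hmem : J0 ∩ J ∈ T := Finset.mem_filter.2
              ⟨Finset.mem_powerset.2 (Finset.subset_univ _),
               Finset.mem_inter.2 ⟨hjJ0, hjJ⟩, hti⟩
            have heq : J0 ∩ J = J0 :=
              Finset.eq_of_subset_of_card_le Finset.inter_subset_left (hmin _ hmem)
            exact heq ▸ Finset.inter_subset_right
          have hEne : (J0.erase j).Nonempty := by
            rw [← Finset.card_pos]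
            by_contra h
            push_neg at h
            have h0 : J0.erase j = ∅ := Finset.card_eq_zero.1 (by omega)
            have hJ0eq : J0 = {j} := by
              apply Finset.eq_singleton_iff_unique_mem.2
              refine ⟨hjJ0, fun y hy => ?_⟩
              by_contra hyj
              exact absurd (Finset.mem_erase.2 ⟨hyj, hy⟩) (h0 ▸ Finset.notMem_empty y)
            rw [hJ0eq] at htJ0
            simp only [Finset.inf_singleton, Finset.sum_singleton] at htJ0
            omega
          have hPe := hP (J0.erase j) hEne
          set Bad := (J0.erase j).inf A with hBadDef
          have hinterJ0 : (J0.inf A).card = (A j ∩ Bad).card := by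
            conv_lhs => rw [← Finset.insert_erase hjJ0]
            rw [Finset.inf_insert]
            rfl
          have hsum0 : δ j + ∑ i ∈ J0.erase j, δ i = ∑ i ∈ J0, δ i :=
            Finset.add_sum_erase _ _ hjJ0
          have hcu : (A j ∪ Bad).card + (A j ∩ Bad).card = (A j).card + Bad.card :=
            Finset.card_union_add_card_inter _ _
          have hcult : (A j ∪ Bad).card < n := by omega
          have hcompl : (A j ∪ Bad)ᶜ.Nonempty := by
            rw [← Finset.card_pos, Finset.card_compl]
            simp only [Fintype.card_fin]
            omega
          obtain ⟨x, hx⟩ := hcompl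
          have hxmem := Finset.mem_compl.1 hx
          refine ⟨x, fun h => hxmem (Finset.mem_union_left _ h), ?_⟩
          intro J hjJ htJ hxin
          have hJ0J := hsub J hjJ htJ
          have hmono : (J.erase j).inf A ≤ Bad :=
            Finset.inf_mono (Finset.erase_subset_erase j hJ0J)
          exact hxmem (Finset.mem_union_right _ (hmono hxin))
        · push_neg at hT
          have hcd : (A j).card < n := by omega
          have : (A j)ᶜ.Nonempty := by
            rw [← Finset.card_pos, Finset.card_compl]
            simp only [Fintype.card_fin]
            omega
          obtain ⟨x, hx⟩ := this
          exact ⟨x, Finset.mem_compl.1 hx, fun J hjJ htJ => absurd htJ (hT J hjJ)⟩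
      obtain ⟨x, hxA, hxgood⟩ := key
      set A1 : Fin ℓ → Finset (Fin n) := Function.update A j (insert x (A j)) with hA1
      have hA1j : A1 j = insert x (A j) := Function.update_self _ _ _
      have hA1i : ∀ i, i ≠ j → A1 i = A i := fun i hi => Function.update_of_ne hi _ _
      have hA1jc : (A1 j).card = (A j).card + 1 := by
        rw [hA1j, Finset.card_insert_of_notMem hxA]
      have hPA1 : P k δ A1 := by
        intro J hJne
        by_cases hjJ : j ∈ J
        · have hinfE : (J.erase j).inf A1 = (J.erase j).inf A :=
            Finset.inf_congr rfl (fun i hi => hA1i i (Finset.ne_of_mem_erase hi))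
          have hsplit1 : J.inf A1 = insert x (A j) ⊓ (J.erase j).inf A := by
            conv_lhs => rw [← Finset.insert_erase hjJ]
            rw [Finset.inf_insert, hA1j, hinfE]
          have hsplit : J.inf A = A j ⊓ (J.erase j).inf A := by
            conv_lhs => rw [← Finset.insert_erase hjJ]
            rw [Finset.inf_insert]
          by_cases hx : x ∈ (J.erase j).inf A
          · have hnt : (J.inf A).card + ∑ i ∈ J, δ i ≠ k := by
              intro htJ
              exact hxgood J hjJ htJ hx
            have hle := hP J hJne
            have hcard1 : (J.inf A1).card ≤ (J.inf A).card + 1 := by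
              rw [hsplit1, hsplit]
              have heq2 : insert x (A j) ⊓ (J.erase j).inf A
                  = insert x (A j ⊓ (J.erase j).inf A) :=
                Finset.insert_inter_of_mem hx
              rw [heq2]
              exact Finset.card_insert_le _ _
            omega
          · have heq2 : J.inf A1 = J.inf A := by
              rw [hsplit1, hsplit]
              exact Finset.insert_inter_of_notMem hx
            rw [heq2]
            exact hP J hJne
        · have : J.inf A1 = J.inf A :=
            Finset.inf_congr rfl (fun i hi => hA1i i (fun h => hjJ (h ▸ hi)))
          rw [this]
          exact hP J hJne
      have hm1 : (∑ i, (k - δ i - (A1 i).card)) ≤ N := by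
        have e1 : (k - δ j - (A1 j).card) + ∑ i ∈ univ.erase j, (k - δ i - (A1 i).card)
            = ∑ i, (k - δ i - (A1 i).card) :=
          Finset.add_sum_erase _ (fun i => k - δ i - (A1 i).card) (Finset.mem_univ j)
        have e2 : (k - δ j - (A j).card) + ∑ i ∈ univ.erase j, (k - δ i - (A i).card)
            = ∑ i, (k - δ i - (A i).card) :=
          Finset.add_sum_erase _ (fun i => k - δ i - (A i).card) (Finset.mem_univ j)
        have e3 : ∑ i ∈ univ.erase j, (k - δ i - (A1 i).card)
            = ∑ i ∈ univ.erase j, (k - δ i - (A i).card) :=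
          Finset.sum_congr rfl (fun i hi => by
            rw [hA1i i (Finset.ne_of_mem_erase hi)])
        omega
      obtain ⟨A', hA'1, hA'2⟩ := ih A1 hm1 hPA1
      refine ⟨A', fun i => ⟨?_, (hA'1 i).2⟩, hA'2⟩
      rcases eq_or_ne i j with rfl | hij
      · exact Finset.Subset.trans (Finset.subset_insert x (A i))
          (hA1j ▸ (hA'1 i).1)
      · exact (hA1i i hij) ▸ (hA'1 i).1

end GZPaux

theorem gzp_extends_to_maximal (n k ℓ : ℕ) (hk : 1 ≤ k) (hkn : k ≤ n)
    (A : Fin ℓ → Finset (Fin n)) (hAinj : Function.Injective A)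
    (hAne : ∀ i, (A i).Nonempty)
    (δ : Fin ℓ → ℕ) (hδpos : ∀ i, 1 ≤ δ i) (hδ : ∑ i, δ i ≤ k)
    (S : Fin k → Finset (Fin n))
    (hS : Finset.univ.val.map S =
        (∑ i, Multiset.replicate (δ i) (A i)) + Multiset.replicate (k - ∑ i, δ i) ∅)
    (hgen : IsGenericZP S) :
    ∃ A' : Fin ℓ → Finset (Fin n),
      (∀ i, A i ⊆ A' i ∧ (A' i).card = k - δ i) ∧
      ∀ S' : Fin k → Finset (Fin n),
        Finset.univ.val.map S' =
          (∑ i, Multiset.replicate (δ i) (A' i)) + Multiset.replicate (k - ∑ i, δ i) ∅ →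
        IsGenericZP S' ∧ patternOrder S' = ℓ := by
  classical
  have hAne' : ∀ i, A i ≠ ∅ := fun i => Finset.nonempty_iff_ne_empty.1 (hAne i)
  have hPA : GZPaux.P k δ A := GZPaux.P_of_gzp δ hδpos A hAinj hAne' S hS hgen
  obtain ⟨A', hA'prop, hPA'⟩ :=
    GZPaux.extend_aux hkn δ (∑ j, (k - δ j - (A j).card)) A le_rfl hPA
  have hδk : ∀ j, δ j < k := by
    intro j
    have h1 := hPA {j} ⟨j, Finset.mem_singleton_self j⟩
    simp only [Finset.inf_singleton, Finset.sum_singleton] at h1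
    have h2 : 1 ≤ (A j).card := Finset.card_pos.2 (hAne j)
    omega
  have hA'ne : ∀ j, A' j ≠ ∅ := by
    intro j h
    have h1 := (hA'prop j).2
    rw [h] at h1
    simp only [Finset.card_empty] at h1
    have := hδk j
    omega
  have hA'inj : Function.Injective A' := by
    intro i j hij
    by_contra hne2
    have h1 := hPA' {i, j} ⟨i, by simp⟩
    rw [Finset.inf_insert, Finset.inf_singleton, ← hij, inf_idem] at h1
    rw [Finset.sum_insert (by simp [hne2]), Finset.sum_singleton] at h1
    rw [(hA'prop i).2] at h1
    have h2 := hδk i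
    have h3 := hδpos j
    omega
  exact ⟨A', hA'prop, fun S' hS' =>
    ⟨GZPaux.gzp_of_P δ hδpos A' hA'inj hA'ne S' hS' hPA',
     GZPaux.order_eq δ hδpos A' hA'inj hA'ne S' hS'⟩⟩
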